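/- arXiv:1602.08928 — 8 statements merged into one kernel-verified Lean document; each statement's English description precedes it below -/
import Mathlib

section
/- Let G be a locally compact second countable group. For compact K ⊆ G and identity neighbourhood V define U_{K,V} = {(P,Q) ∈ C(G) × C(G) : ∃ t ∈ V, P ∩ K = tQ ∩ K}. Then the family {U_{K,V} : K compact, V ∈ 𝔘(G)} is a fundamental system of entourages for a uniformity on the set C(G) of closed subsets of G. That is: each U_{K,V} contains the diagonal; the family is a filter base; for each U_{K,V} there is a member contained in its inverse; and for each U_{K,V} there is a member whose composition with itself lies in U_{K,V}. -/
open Pointwise Topology Filter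

variable (G : Type*) [Group G] [TopologicalSpace G] [IsTopologicalGroup G]

/-- The space `C(G)` of closed subsets of `G`. -/
def ClosedSets := {C : Set G // IsClosed C}

/-- The entourage `U_{K,V} = {(P,Q) | ∃ t ∈ V, P ∩ K = tQ ∩ K}`. -/
def locEnt (K V : Set G) : Set (ClosedSets G × ClosedSets G) :=
  {PQ | ∃ t ∈ V, PQ.1.1 ∩ K = (t • PQ.2.1) ∩ K}

lemma inter_eq_restrict {α : Type*} {A B S T : Set α} (h : A ∩ S = B ∩ S) (hT : T ⊆ S) :
    A ∩ T = B ∩ T := by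
  have : S ∩ T = T := Set.inter_eq_self_of_subset_right hT
  calc A ∩ T = (A ∩ S) ∩ T := by rw [Set.inter_assoc, this]
    _ = (B ∩ S) ∩ T := by rw [h]
    _ = B ∩ T := by rw [Set.inter_assoc, this]

lemma locEnt_mono {K K' V V' : Set G} (hK : K ⊆ K') (hV : V' ⊆ V) :
    locEnt G K' V' ⊆ locEnt G K V := by
  rintro ⟨P, Q⟩ ⟨t, ht, hPQ⟩
  exact ⟨t, hV ht, inter_eq_restrict hPQ hK⟩

/-- The family `{U_{K,V} : K compact, V an identity neighbourhood}` is a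
fundamental system of entourages of a uniformity on `C(G)`: each member contains the
diagonal (B1), the family is a filter base (B2), each member contains a member of the
family inside its inverse (B3), and each member contains the composition of some member
with itself (B4). -/
theorem locEnt_fundamental_system
    [LocallyCompactSpace G] [SecondCountableTopology G] :
    (∀ K V : Set G, IsCompact K → V ∈ 𝓝 (1 : G) → SetRel.id ⊆ locEnt G K V) ∧
    (∀ K₁ V₁ K₂ V₂ : Set G, IsCompact K₁ → V₁ ∈ 𝓝 (1 : G) →
      IsCompact K₂ → V₂ ∈ 𝓝 (1 : G) →
      ∃ K₃ V₃ : Set G, IsCompact K₃ ∧ V₃ ∈ 𝓝 (1 : G) ∧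
        locEnt G K₃ V₃ ⊆ locEnt G K₁ V₁ ∩ locEnt G K₂ V₂) ∧
    (∀ K V : Set G, IsCompact K → V ∈ 𝓝 (1 : G) →
      ∃ K' V' : Set G, IsCompact K' ∧ V' ∈ 𝓝 (1 : G) ∧
        locEnt G K' V' ⊆ Prod.swap '' locEnt G K V) ∧
    (∀ K V : Set G, IsCompact K → V ∈ 𝓝 (1 : G) →
      ∃ K' V' : Set G, IsCompact K' ∧ V' ∈ 𝓝 (1 : G) ∧
        SetRel.comp (locEnt G K' V') (locEnt G K' V') ⊆ locEnt G K V) := by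
  refine ⟨?_, ?_, ?_, ?_⟩
  · -- B1
    rintro K V _ hV ⟨P, Q⟩ hPQ
    rw [SetRel.mem_id] at hPQ
    exact ⟨1, mem_of_mem_nhds hV, by simp [hPQ]⟩
  · -- B2
    intro K₁ V₁ K₂ V₂ hK₁ hV₁ hK₂ hV₂
    refine ⟨K₁ ∪ K₂, V₁ ∩ V₂, hK₁.union hK₂, Filter.inter_mem hV₁ hV₂, ?_⟩
    exact Set.subset_inter
      (locEnt_mono G Set.subset_union_left Set.inter_subset_left)
      (locEnt_mono G Set.subset_union_right Set.inter_subset_right)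
  · -- B3
    intro K V hK hV
    obtain ⟨C, hCmem, hCsub, hCcomp⟩ :=
      LocallyCompactSpace.local_compact_nhds (1 : G) V⁻¹ (inv_mem_nhds_one G hV)
    refine ⟨C * K, C, hCcomp.mul hK, hCmem, ?_⟩
    rintro ⟨P, Q⟩ ⟨t, ht, hPQ⟩
    have htK : t • K ⊆ C * K := by
      rintro x ⟨k, hk, rfl⟩
      exact Set.mul_mem_mul ht hk
    have h1 : P.1 ∩ t • K = (t • Q.1) ∩ t • K := inter_eq_restrict hPQ htK
    have h2 : t⁻¹ • (P.1 ∩ t • K) = t⁻¹ • ((t • Q.1) ∩ t • K) := by rw [h1]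
    rw [Set.smul_set_inter, Set.smul_set_inter, inv_smul_smul, inv_smul_smul] at h2
    exact ⟨(Q, P), ⟨t⁻¹, Set.mem_inv.mp (hCsub ht), h2.symm⟩, rfl⟩
  · -- B4
    intro K V hK hV
    obtain ⟨W, hWopen, hW1, hWW⟩ := exists_open_nhds_one_mul_subset hV
    obtain ⟨C, hCmem, hCsub, hCcomp⟩ :=
      LocallyCompactSpace.local_compact_nhds (1 : G) W (hWopen.mem_nhds hW1)
    refine ⟨K ∪ C⁻¹ * K, C, hK.union (hCcomp.inv.mul hK), hCmem, ?_⟩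
    rintro ⟨P, R⟩ ⟨Q, ⟨t, ht, h1⟩, ⟨s, hs, h2⟩⟩
    refine ⟨t * s, hWW (Set.mul_mem_mul (hCsub ht) (hCsub hs)), ?_⟩
    have hPQ : P.1 ∩ K = (t • Q.1) ∩ K := inter_eq_restrict h1 Set.subset_union_left
    have htKsub : t⁻¹ • K ⊆ K ∪ C⁻¹ * K := by
      rintro x ⟨k, hk, rfl⟩
      exact Set.mem_union_right _ (Set.mul_mem_mul (Set.inv_mem_inv.mpr ht) hk)
    have h3 : Q.1 ∩ t⁻¹ • K = (s • R.1) ∩ t⁻¹ • K := inter_eq_restrict h2 htKsub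
    have h4 : t • (Q.1 ∩ t⁻¹ • K) = t • ((s • R.1) ∩ t⁻¹ • K) := by rw [h3]
    rw [Set.smul_set_inter, Set.smul_set_inter, smul_inv_smul, smul_smul] at h4
    rw [hPQ, h4]
end

section
/- Let G be a locally compact second countable group and equip the set C(G) of closed subsets of G with the local topology, in which a neighbourhood basis of P is given by the sets U_{K,V}(P) = {Q closed : ∃ t ∈ V, tQ ∩ K = P ∩ K} for K compact and V an identity neighbourhood. Then the left-translation action G × C(G) → C(G), (g,P) ↦ gP, is jointly continuous. -/
open Pointwise Topology Filter

variable (G : Type*) [Group G] [TopologicalSpace G] [IsTopologicalGroup G]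

/-- The local topology on `C(G)`: a set is open iff around each of its points `P` it
contains a basic neighbourhood `U_{K,V}(P) = {Q | ∃ t ∈ V, tQ ∩ K = P ∩ K}` with `K`
compact and `V` an identity neighbourhood. -/
def locTop : TopologicalSpace (ClosedSets G) where
  IsOpen S := ∀ P ∈ S, ∃ K V : Set G, IsCompact K ∧ V ∈ 𝓝 (1 : G) ∧
    {Q : ClosedSets G | ∃ t ∈ V, (t • Q.1) ∩ K = P.1 ∩ K} ⊆ S
  isOpen_univ := fun P _ =>
    ⟨∅, Set.univ, isCompact_empty, Filter.univ_mem, fun _ _ => trivial⟩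
  isOpen_inter := by
    intro S₁ S₂ h₁ h₂ P hP
    obtain ⟨K₁, V₁, hK₁, hV₁, hsub₁⟩ := h₁ P hP.1
    obtain ⟨K₂, V₂, hK₂, hV₂, hsub₂⟩ := h₂ P hP.2
    refine ⟨K₁ ∪ K₂, V₁ ∩ V₂, hK₁.union hK₂, Filter.inter_mem hV₁ hV₂, ?_⟩
    have e : ∀ (A : Set G) (K : Set G), K ⊆ K₁ ∪ K₂ →
        A ∩ (K₁ ∪ K₂) ∩ K = A ∩ K := by
      intro A K hK
      rw [Set.inter_assoc, Set.inter_eq_right.2 hK]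
    rintro Q ⟨t, htV, ht⟩
    constructor
    · exact hsub₁ ⟨t, htV.1, by
        rw [← e (t • Q.1) K₁ Set.subset_union_left, ht,
          e P.1 K₁ Set.subset_union_left]⟩
    · exact hsub₂ ⟨t, htV.2, by
        rw [← e (t • Q.1) K₂ Set.subset_union_right, ht,
          e P.1 K₂ Set.subset_union_right]⟩
  isOpen_sUnion := by
    intro 𝒮 h P hP
    obtain ⟨s, hs, hPs⟩ := hP
    obtain ⟨K, V, hK, hV, hsub⟩ := h s hs P hPs
    exact ⟨K, V, hK, hV, fun Q hQ => ⟨s, hs, hsub hQ⟩⟩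

/-- Left translation on closed subsets. -/
noncomputable def transL (g : G) (C : ClosedSets G) : ClosedSets G :=
  ⟨g • C.1, by
    have e : g • C.1 = (Homeomorph.mulLeft g) '' C.1 := by
      ext x
      constructor
      · rintro ⟨y, hy, rfl⟩; exact ⟨y, hy, rfl⟩
      · rintro ⟨y, hy, rfl⟩; exact ⟨y, hy, rfl⟩
    rw [e]
    exact (Homeomorph.mulLeft g).isClosedMap _ C.2⟩


theorem basic_open (P : ClosedSets G) (K V : Set G) (hK : IsCompact K)
    (hV : IsOpen V) :
    letI : TopologicalSpace (ClosedSets G) := locTop G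
    IsOpen {Q : ClosedSets G | ∃ t ∈ V, (t • Q.1) ∩ K = P.1 ∩ K} := by
  rintro Q ⟨t, htV, ht⟩
  refine ⟨t⁻¹ • K, t⁻¹ • V, hK.smul t⁻¹, (hV.smul t⁻¹).mem_nhds ⟨t, htV, by simp⟩, ?_⟩
  rintro R ⟨s, hsV, hs⟩
  obtain ⟨u, huV, rfl⟩ := hsV
  refine ⟨u, huV, ?_⟩
  have h2 := congrArg (t • ·) hs
  simp only [Set.smul_set_inter, smul_smul, smul_eq_mul, mul_inv_cancel_left,
    mul_inv_cancel, one_smul] at h2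
  rw [h2, ht]

/-- The left-translation action `(g, P) ↦ gP` on `C(G)` with the local
topology is jointly continuous. -/
theorem locTop_action_continuous
    [LocallyCompactSpace G] [SecondCountableTopology G] :
    letI : TopologicalSpace (ClosedSets G) := locTop G
    Continuous (fun p : G × ClosedSets G => transL G p.1 p.2) := by
  letI : TopologicalSpace (ClosedSets G) := locTop G
  rw [continuous_def]
  intro S hS
  rw [isOpen_iff_mem_nhds]
  rintro ⟨g, P⟩ hgP
  obtain ⟨K, V, hK, hV, hsub⟩ := hS _ hgP
  have hconj : Continuous (fun x : G => g * x * g⁻¹) :=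
    (continuous_const.mul continuous_id).mul continuous_const
  have hV2 : (fun x : G => g * x * g⁻¹) ⁻¹' V ∈ 𝓝 (1 : G) :=
    hconj.continuousAt.preimage_mem_nhds (by simpa using hV)
  obtain ⟨V₃, hV₃open, h1V₃, hV₃mul⟩ := exists_open_nhds_one_mul_subset hV2
  set W : Set G := V₃ ∩ V₃⁻¹ with hWdef
  have hWopen : IsOpen W := hV₃open.inter (hV₃open.preimage continuous_inv)
  have h1W : (1 : G) ∈ W := ⟨h1V₃, by simpa using h1V₃⟩
  rw [mem_nhds_prod_iff]
  refine ⟨g • W, (hWopen.smul g).mem_nhds ⟨1, h1W, mul_one g⟩,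
    {Q : ClosedSets G | ∃ t ∈ W, (t • Q.1) ∩ (g⁻¹ • K) = P.1 ∩ (g⁻¹ • K)},
    (basic_open G P (g⁻¹ • K) W (hK.smul g⁻¹) hWopen).mem_nhds
      ⟨1, h1W, by rw [one_smul]⟩, ?_⟩
  rintro ⟨g', Q⟩ ⟨hg', t, htW, ht⟩
  obtain ⟨w, hwW, rfl⟩ := hg'
  apply hsub
  refine ⟨g * (t * w⁻¹) * g⁻¹, hV₃mul ⟨t, htW.1, w⁻¹, hwW.2, rfl⟩, ?_⟩
  have h2 := congrArg (g • ·) ht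
  simp only [Set.smul_set_inter, smul_smul, smul_eq_mul, mul_inv_cancel_left,
    mul_inv_cancel, one_smul] at h2
  show (g * (t * w⁻¹) * g⁻¹) • ((g • w) • Q.1) ∩ K = (g • P.1) ∩ K
  rw [smul_smul, smul_eq_mul]
  have : g * (t * w⁻¹) * g⁻¹ * (g * w) = g * t := by group
  rw [this, ← smul_smul, smul_smul, h2]
end

section
/- Let G be a locally compact second countable group. The identity map from C(G) equipped with the local topology to C(G) equipped with the Chabauty–Fell topology is continuous; i.e., the local topology is finer than the Chabauty–Fell topology. -/
open Pointwise Topology Filter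

variable (G : Type*) [Group G] [TopologicalSpace G] [IsTopologicalGroup G]

/-- The Chabauty–Fell topology on `C(G)`. -/
def chabautyFell : TopologicalSpace (ClosedSets G) :=
  TopologicalSpace.generateFrom
    ({S | ∃ V : Set G, IsOpen V ∧ S = {C : ClosedSets G | (C.1 ∩ V).Nonempty}} ∪
     {S | ∃ K : Set G, IsCompact K ∧ S = {C : ClosedSets G | C.1 ∩ K = ∅}})

/-- The identity map from `C(G)` with the local topology to `C(G)` with
the Chabauty–Fell topology is continuous; i.e. the local topology is finer. -/
theorem locTop_finer_chabautyFell
    [LocallyCompactSpace G] [SecondCountableTopology G] :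
    @Continuous (ClosedSets G) (ClosedSets G) (locTop G) (chabautyFell G) id := by
  rw [@continuous_id_iff_le _ (locTop G) (chabautyFell G)]
  apply le_generateFrom
  rintro s (⟨V, hV, rfl⟩ | ⟨K, hK, rfl⟩)
  · -- hit sets
    intro P hP
    obtain ⟨x, hxP, hxV⟩ := hP
    have hcont : Continuous fun t : G => t⁻¹ * x := by continuity
    have hW : {t : G | t⁻¹ * x ∈ V} ∈ 𝓝 (1 : G) := by
      have := hcont.continuousAt (x := (1 : G)) (hV.mem_nhds (by simpa using hxV))
      exact this
    refine ⟨{x}, {t : G | t⁻¹ * x ∈ V}, isCompact_singleton, hW, ?_⟩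
    rintro Q ⟨t, htV, ht⟩
    have hx : x ∈ (t • Q.1) ∩ {x} := ht ▸ ⟨hxP, rfl⟩
    obtain ⟨q, hq, hqx⟩ := hx.1
    refine ⟨q, hq, ?_⟩
    have : q = t⁻¹ * x := by
      rw [← hqx]; simp [smul_eq_mul]
    rw [this]; exact htV
  · -- miss sets
    intro P hP
    simp only [Set.mem_setOf_eq] at hP
    obtain ⟨W, hWc, hWn⟩ := exists_compact_mem_nhds (1 : G)
    have hKU : K ⊆ P.1ᶜ := fun k hk => fun hkP => by
      have : k ∈ P.1 ∩ K := ⟨hkP, hk⟩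
      rw [hP] at this; exact this
    obtain ⟨V, hVn, hVK⟩ := compact_open_separated_mul_left hK P.2.isOpen_compl hKU
    refine ⟨W * K, W ∩ V, hWc.mul hK, inter_mem hWn hVn, ?_⟩
    rintro Q ⟨t, ⟨htW, htV⟩, ht⟩
    simp only [Set.mem_setOf_eq]
    by_contra h
    obtain ⟨q, hqQ, hqK⟩ := Set.nonempty_iff_ne_empty.2 h
    have h1 : t * q ∈ (t • Q.1) ∩ (W * K) :=
      ⟨⟨q, hqQ, rfl⟩, Set.mul_mem_mul htW hqK⟩
    rw [ht] at h1
    have h2 : t * q ∈ V * K := Set.mul_mem_mul htV hqK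
    exact hVK h2 h1.1
end

section
/- Let G be a locally compact second countable group and P ⊆ G a locally finite subset. Then the following are equivalent: (i) P has finite local complexity, i.e. P⁻¹P is closed and discrete; (ii) the orbit G·P = {gP : g ∈ G} is pre-compact in the local topology on closed subsets of G; (iii) for every compact K ⊆ G there exists a compact K' ⊆ G such that for every t ∈ G there exists t' ∈ K' with tP ∩ K = t'P ∩ K. -/
open Pointwise Topology Filter

variable (G : Type*) [Group G] [TopologicalSpace G] [IsTopologicalGroup G]

set_option linter.unusedSectionVars false

namespace FLCaux

variable {G : Type*} [Group G] [TopologicalSpace G] [IsTopologicalGroup G]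

lemma inter_mono {A B K L : Set G} (h : A ∩ L = B ∩ L) (hKL : K ⊆ L) :
    A ∩ K = B ∩ K := by
  have h2 : A ∩ (L ∩ K) = B ∩ (L ∩ K) := by
    rw [← Set.inter_assoc, h, Set.inter_assoc]
  rwa [Set.inter_eq_right.mpr hKL] at h2

lemma smul_inter (t : G) (X K : Set G) : t • (X ∩ t⁻¹ • K) = t • X ∩ K := by
  rw [Set.smul_set_inter, smul_inv_smul]

lemma patch_shift (t : G) {X Y K : Set G} (h : X ∩ t⁻¹ • K = Y ∩ t⁻¹ • K) :
    (t • X) ∩ K = (t • Y) ∩ K := by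
  rw [← smul_inter t X K, h, smul_inter]

lemma inv_smul_subset {N K : Set G} {t : G} (ht : t ∈ N) : t⁻¹ • K ⊆ N⁻¹ * K := by
  rintro x ⟨k, hk, rfl⟩
  exact Set.mul_mem_mul (Set.inv_mem_inv.mpr ht) hk

lemma locFin {S : Set G} (hc : IsClosed S) (hd : DiscreteTopology S) {C : Set G}
    (hC : IsCompact C) : (S ∩ C).Finite := by
  have h1 : IsCompact (S ∩ C) := hC.inter_left hc
  haveI : DiscreteTopology ↥(S ∩ C) := hd.of_subset Set.inter_subset_left
  exact h1.finite (isDiscrete_iff_discreteTopology.mpr ‹_›)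

variable (G) in
/-- condition (iii) -/
def FLC3 (P : Set G) : Prop := ∀ K : Set G, IsCompact K → ∃ K' : Set G, IsCompact K' ∧
  ∀ t : G, ∃ t' ∈ K', (t • P) ∩ K = (t' • P) ∩ K

variable (G) in
def Cset (P : Set G) : Set (ClosedSets G) :=
  {Q | ∀ K : Set G, IsCompact K → ∃ s : G, Q.1 ∩ K = (s • P) ∩ K}

lemma orbit_sub_C (P : Set G) : {Q : ClosedSets G | ∃ g : G, Q.1 = g • P} ⊆ Cset G P := by
  rintro Q ⟨g, hg⟩ K hK
  exact ⟨g, by rw [hg]⟩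

/-- (i) implies (iii) -/
lemma lemA {P : Set G}
    (h : IsClosed (P⁻¹ * P) ∧ DiscreteTopology ↥(P⁻¹ * P)) : FLC3 G P := by
  classical
  intro K hK
  set L : Set G := K⁻¹ * K with hL
  have hLc : IsCompact L := hK.inv.mul hK
  have hF : ((P⁻¹ * P) ∩ L).Finite := locFin h.1 h.2 hLc
  set f : G → Set G := fun p => p⁻¹ • P ∩ L with hf
  have hIfin : (f '' P).Finite := by
    apply hF.finite_subsets.subset
    rintro _ ⟨p, hp, rfl⟩
    rintro x ⟨hx1, hx2⟩
    refine ⟨?_, hx2⟩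
    obtain ⟨q, hq, rfl⟩ := hx1
    exact Set.mul_mem_mul (Set.inv_mem_inv.mpr hp) hq
  set g : Set G → G := fun S => if h : ∃ p ∈ P, f p = S then h.choose else 1 with hg
  have hgspec : ∀ S ∈ f '' P, g S ∈ P ∧ f (g S) = S := by
    intro S hS
    obtain ⟨p, hp, hpS⟩ := hS
    have hex : ∃ p ∈ P, f p = S := ⟨p, hp, hpS⟩
    simp only [hg, dif_pos hex]
    exact ⟨hex.choose_spec.1, hex.choose_spec.2⟩
  set reps : Set G := (fun S => (g S)⁻¹) '' (f '' P) with hreps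
  have hrepsfin : reps.Finite := hIfin.image _
  have hKrc : IsCompact (K * reps) := hK.mul hrepsfin.isCompact
  have main : ∀ t : G, ((t • P) ∩ K).Nonempty →
      ∃ t' ∈ K * reps, (t • P) ∩ K = (t' • P) ∩ K := by
    intro t ⟨k, hkP, hkK⟩
    obtain ⟨p₀, hp₀, hp₀k⟩ := hkP
    have ht : t = k * p₀⁻¹ := by
      rw [← hp₀k]; simp [smul_eq_mul, mul_assoc]
    obtain ⟨hgP, hgf⟩ := hgspec (f p₀) ⟨p₀, hp₀, rfl⟩
    set p₁ : G := g (f p₀) with hp₁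
    refine ⟨k * p₁⁻¹, Set.mul_mem_mul hkK ⟨f p₀, ⟨p₀, hp₀, rfl⟩, rfl⟩, ?_⟩
    have key : ∀ x ∈ K, (x ∈ t • P ↔ x ∈ (k * p₁⁻¹) • P) := by
      intro x hxK
      have hyL : k⁻¹ • x ∈ L := by
        rw [smul_eq_mul]
        exact Set.mul_mem_mul (Set.inv_mem_inv.mpr hkK) hxK
      have hmem : ∀ q : G, x ∈ (k * q⁻¹) • P ↔ k⁻¹ • x ∈ q⁻¹ • P := by
        intro q
        rw [mul_smul, Set.mem_smul_set_iff_inv_smul_mem]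
      have e : p₁⁻¹ • P ∩ L = p₀⁻¹ • P ∩ L := hgf
      rw [ht, hmem p₀, hmem p₁]
      constructor
      · intro hx
        have h5 : k⁻¹ • x ∈ p₀⁻¹ • P ∩ L := ⟨hx, hyL⟩
        rw [← e] at h5
        exact h5.1
      · intro hx
        have h5 : k⁻¹ • x ∈ p₁⁻¹ • P ∩ L := ⟨hx, hyL⟩
        rw [e] at h5
        exact h5.1
    ext x
    constructor
    · rintro ⟨h1, h2⟩; exact ⟨(key x h2).mp h1, h2⟩
    · rintro ⟨h1, h2⟩; exact ⟨(key x h2).mpr h1, h2⟩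
  by_cases hE : ∃ s : G, (s • P) ∩ K = ∅
  · refine ⟨K * reps ∪ {hE.choose}, hKrc.union isCompact_singleton, ?_⟩
    intro t
    by_cases ht : ((t • P) ∩ K) = ∅
    · exact ⟨hE.choose, Or.inr rfl, by rw [ht, hE.choose_spec]⟩
    · obtain ⟨t', ht', heq⟩ := main t (Set.nonempty_iff_ne_empty.mpr ht)
      exact ⟨t', Or.inl ht', heq⟩
  · refine ⟨K * reps, hKrc, ?_⟩
    intro t
    have ht : ((t • P) ∩ K) ≠ ∅ := fun h0 => hE ⟨t, h0⟩
    exact main t (Set.nonempty_iff_ne_empty.mpr ht)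

/-- from local finiteness of S (finite intersection with compacts), closed + discrete -/
lemma closed_discrete_of_locfin [LocallyCompactSpace G] [T2Space G] {S : Set G}
    (hfin : ∀ C : Set G, IsCompact C → (S ∩ C).Finite) :
    IsClosed S ∧ DiscreteTopology ↥S := by
  constructor
  · refine isClosed_of_closure_subset ?_
    intro x hx
    obtain ⟨M, hMc, hMn⟩ := exists_compact_mem_nhds x
    have h1 : x ∈ closure (S ∩ M) := by
      rw [mem_closure_iff_nhds] at hx ⊢
      intro U hU
      obtain ⟨y, hy⟩ := hx (U ∩ M) (inter_mem hU hMn)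
      exact ⟨y, ⟨hy.1.1, hy.2, hy.1.2⟩⟩
    rw [(hfin M hMc).isClosed.closure_eq] at h1
    exact h1.1
  · rw [discreteTopology_subtype_iff]
    intro x hx
    obtain ⟨M, hMc, hMn⟩ := exists_compact_mem_nhds x
    have hFf : ((S ∩ M) \ {x}).Finite := (hfin M hMc).diff
    rw [← Filter.empty_mem_iff_bot, Filter.mem_inf_iff_superset]
    have hW : interior M \ ((S ∩ M) \ {x}) ∈ 𝓝 x := by
      refine (isOpen_interior.sdiff hFf.isClosed).mem_nhds ⟨?_, ?_⟩
      · exact mem_interior_iff_mem_nhds.mpr hMn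
      · intro hmem
        exact hmem.2 rfl
    refine ⟨_, inter_mem (mem_nhdsWithin_of_mem_nhds hW) self_mem_nhdsWithin, S,
      Filter.mem_principal_self S, ?_⟩
    rintro y ⟨⟨⟨hyM, hyF⟩, hyx⟩, hyS⟩
    exact hyF ⟨⟨hyS, interior_subset hyM⟩, hyx⟩

/-- (iii) implies (i), in T2 locally compact groups -/
lemma lemB [LocallyCompactSpace G] [T2Space G] {P : Set G}
    (hPc : IsClosed P) (hPd : DiscreteTopology P) (h3 : FLC3 G P) :
    IsClosed (P⁻¹ * P) ∧ DiscreteTopology ↥(P⁻¹ * P) := by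
  apply closed_discrete_of_locfin
  intro C hC
  obtain ⟨K', hK'c, hprop⟩ := h3 (C ∪ {1}) (hC.union isCompact_singleton)
  have hsub : (P⁻¹ * P) ∩ C ⊆ ⋃ q ∈ P ∩ K'⁻¹, (q⁻¹ • P) ∩ C := by
    rintro x ⟨hx, hxC⟩
    obtain ⟨a, ha, r, hr, rfl⟩ := hx
    obtain ⟨p, hp, rfl⟩ : ∃ p ∈ P, p⁻¹ = a := ⟨a⁻¹, Set.mem_inv.mp ha, inv_inv a⟩
    obtain ⟨t', ht'K', hpatch⟩ := hprop p⁻¹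
    have h1 : (1 : G) ∈ (p⁻¹ • P) ∩ (C ∪ {1}) :=
      ⟨⟨p, hp, by simp⟩, Or.inr rfl⟩
    rw [hpatch] at h1
    obtain ⟨q, hq, hq1⟩ := h1.1
    have ht'q : t' = q⁻¹ := eq_inv_iff_mul_eq_one.mpr (by rwa [← smul_eq_mul])
    have hxm : p⁻¹ * r ∈ (p⁻¹ • P) ∩ (C ∪ {1}) :=
      ⟨⟨r, hr, rfl⟩, Or.inl hxC⟩
    rw [hpatch] at hxm
    have hmem1 : q ∈ P ∩ K'⁻¹ := ⟨hq, by rw [Set.mem_inv, ← ht'q]; exact ht'K'⟩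
    exact Set.mem_biUnion hmem1 ⟨ht'q ▸ hxm.1, hxC⟩
  refine Set.Finite.subset (Set.Finite.biUnion (locFin hPc hPd hK'c.inv) ?_) hsub
  intro q hq
  have : (q⁻¹ • P) ∩ C = q⁻¹ • (P ∩ q • C) := by
    rw [Set.smul_set_inter, inv_smul_smul]
  rw [this]
  exact (locFin hPc hPd (hC.smul q)).smul_set

/-- the set of limits of translates is closed -/
lemma Cclosed [LocallyCompactSpace G] (P : Set G) : @IsClosed _ (locTop G) (Cset G P) := by
  letI := locTop G
  rw [← isOpen_compl_iff]
  show ∀ R ∈ (Cset G P)ᶜ, ∃ K V : Set G, IsCompact K ∧ V ∈ 𝓝 (1 : G) ∧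
    {Q : ClosedSets G | ∃ t ∈ V, (t • Q.1) ∩ K = R.1 ∩ K} ⊆ (Cset G P)ᶜ
  intro R hR
  simp only [Cset, Set.mem_compl_iff, Set.mem_setOf_eq] at hR
  push_neg at hR
  obtain ⟨K, hKc, hbad⟩ := hR
  obtain ⟨N, hNc, hN1⟩ := exists_compact_mem_nhds (1 : G)
  have h1N : (1 : G) ∈ N := mem_of_mem_nhds hN1
  refine ⟨N⁻¹ * K, N, hNc.inv.mul hKc, hN1, ?_⟩
  rintro Q ⟨t, htN, hpatch⟩ hQC
  obtain ⟨s, hs⟩ := hQC (t⁻¹ • K) (hKc.smul t⁻¹)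
  have h2 : (t • Q.1) ∩ K = ((t * s) • P) ∩ K := by
    rw [← smul_inter t Q.1 K, hs, mul_smul]
    rw [smul_inter t (s • P) K]
  have h3 : (t • Q.1) ∩ K = R.1 ∩ K := inter_mono hpatch (by
    have : (1 : G)⁻¹ • K ⊆ N⁻¹ * K := inv_smul_subset h1N
    simpa using this)
  exact hbad (t * s) (by rw [← h2, h3])

/-- basic neighbourhoods contain open sets: the set of R that agree with a fixed A
on K2 after a translation from the interior of N is open. -/
lemma SQopen [LocallyCompactSpace G] {N : Set G} (hNc : IsCompact N)
    {K2 : Set G} (hK2 : IsCompact K2) (A : Set G) :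
    @IsOpen _ (locTop G) {R : ClosedSets G | ∃ t ∈ interior N, (t • R.1) ∩ K2 = A ∩ K2} := by
  letI := locTop G
  show ∀ R ∈ {R : ClosedSets G | ∃ t ∈ interior N, (t • R.1) ∩ K2 = A ∩ K2}, ∃ K V : Set G, IsCompact K ∧ V ∈ 𝓝 (1 : G) ∧
    {Q : ClosedSets G | ∃ t ∈ V, (t • Q.1) ∩ K = R.1 ∩ K} ⊆ {R : ClosedSets G | ∃ t ∈ interior N, (t • R.1) ∩ K2 = A ∩ K2}
  rintro R ⟨t, htN, hpatch⟩
  refine ⟨N⁻¹ * K2, t⁻¹ • interior N, hNc.inv.mul hK2, ?_, ?_⟩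
  · exact (isOpen_interior.smul t⁻¹).mem_nhds ⟨t, htN, by simp⟩
  · rintro R' ⟨u, hu, hp⟩
    obtain ⟨w, hw, rfl⟩ := hu
    refine ⟨t * (t⁻¹ • w), by simpa using hw, ?_⟩
    have h1 : ((t⁻¹ • w) • R'.1) ∩ (t⁻¹ • K2) = R.1 ∩ (t⁻¹ • K2) :=
      inter_mono hp (inv_smul_subset (interior_subset htN))
    have h2 : ((t * (t⁻¹ • w)) • R'.1) ∩ K2 = (t • R.1) ∩ K2 := by
      rw [mul_smul]
      exact patch_shift t h1
    exact h2.trans hpatch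

/-- a nonempty closed discrete subset forces the group to be T1 -/
lemma t1_of_nonempty_locfin {P : Set G} (hPc : IsClosed P) (hPd : DiscreteTopology P)
    (hPne : P.Nonempty) : T1Space G := by
  obtain ⟨p, hp⟩ := hPne
  obtain ⟨U, hUo, hUP⟩ : ∃ U : Set G, IsOpen U ∧ U ∩ P = {p} := by
    have h1 : IsOpen ({⟨p, hp⟩} : Set P) := isOpen_discrete _
    rw [isOpen_induced_iff] at h1
    obtain ⟨U, hU, hU2⟩ := h1
    refine ⟨U, hU, ?_⟩
    ext x
    constructor
    · rintro ⟨hxU, hxP⟩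
      have : (⟨x, hxP⟩ : P) ∈ (Subtype.val ⁻¹' U : Set P) := hxU
      rw [hU2] at this
      simpa using congrArg Subtype.val this
    · intro hx
      rw [Set.mem_singleton_iff] at hx
      have hxP : x ∈ P := hx ▸ hp
      have hmem : (⟨x, hxP⟩ : P) ∈ ({⟨p, hp⟩} : Set P) := by
        simp [Subtype.ext_iff, hx]
      rw [← hU2] at hmem
      exact ⟨hmem, hxP⟩
  have hcl1 : closure ({1} : Set G) = {1} := by
    refine subset_antisymm ?_ subset_closure
    intro n hn
    have h2 : p * n ∈ P := by
      have h3 : p * n ∈ closure ({p} : Set G) := by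
        have h4 := (Homeomorph.mulLeft p).image_closure ({1} : Set G)
        have h5 : p * n ∈ Homeomorph.mulLeft p '' closure ({1} : Set G) :=
          ⟨n, hn, rfl⟩
        rw [h4] at h5
        simpa using h5
      have h6 : closure ({p} : Set G) ⊆ P := by
        rw [← hPc.closure_eq]
        exact closure_mono (Set.singleton_subset_iff.mpr hp)
      exact h6 h3
    have hninv : n⁻¹ ∈ closure ({1} : Set G) := by
      have h4 := (Homeomorph.inv G).image_closure ({1} : Set G)
      have h5 : n⁻¹ ∈ Homeomorph.inv G '' closure ({1} : Set G) := ⟨n, hn, rfl⟩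
      rw [h4] at h5
      simpa using h5
    have h3 : p ∈ closure ({p * n} : Set G) := by
      have h4 := (Homeomorph.mulLeft (p * n)).image_closure ({1} : Set G)
      have h5 : p ∈ Homeomorph.mulLeft (p * n) '' closure ({1} : Set G) := by
        refine ⟨n⁻¹, hninv, ?_⟩
        simp [mul_assoc]
      rw [h4] at h5
      simpa using h5
    have h5 : p * n ∈ U := by
      obtain ⟨y, hyU, hy⟩ := (_root_.mem_closure_iff.mp h3) U hUo (by
        have : p ∈ U ∩ P := by rw [hUP]; rfl
        exact this.1)
      rwa [Set.mem_singleton_iff.mp hy] at hyU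
    have h7 : p * n ∈ U ∩ P := ⟨h5, h2⟩
    rw [hUP, Set.mem_singleton_iff] at h7
    have hn1 : n = 1 := mul_left_cancel (a := p) (by rw [mul_one]; exact h7)
    simp [hn1]
  refine ⟨fun x => ?_⟩
  have h8 := (Homeomorph.mulLeft x).isClosedMap _ (hcl1 ▸ isClosed_closure)
  simpa using h8

/-- (iii) implies that the set of limits of translates is compact. -/
lemma Ccompact [LocallyCompactSpace G] [RegularSpace G] {P : Set G}
    (hPc : IsClosed P) (hPd : DiscreteTopology P) (h3 : FLC3 G P) :
    @IsCompact _ (locTop G) (Cset G P) := by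
  classical
  letI := locTop G
  rw [isCompact_iff_ultrafilter_le_nhds]
  intro 𝒰 h𝒰
  have hC𝒰 : Cset G P ∈ 𝒰 := Filter.le_principal_iff.mp h𝒰
  set Q0 : Set G := {x | ∀ U ∈ 𝓝 x, {R : ClosedSets G | (R.1 ∩ U).Nonempty} ∈ 𝒰}
    with hQ0def
  have hQ0closed : IsClosed Q0 := by
    rw [← isOpen_compl_iff, isOpen_iff_mem_nhds]
    intro x hx
    simp only [hQ0def, Set.mem_compl_iff, Set.mem_setOf_eq] at hx
    push_neg at hx
    obtain ⟨U, hU, hUbad⟩ := hx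
    obtain ⟨U', hU'U, hU'o, hxU'⟩ := mem_nhds_iff.mp hU
    refine Filter.mem_of_superset (hU'o.mem_nhds hxU') ?_
    intro y hy hyQ
    refine hUbad (Filter.mem_of_superset (hyQ U' (hU'o.mem_nhds hy)) ?_)
    intro R hR
    exact hR.mono (Set.inter_subset_inter_right _ hU'U)
  have key : ∀ K : Set G, IsCompact K → ∀ V ∈ 𝓝 (1 : G),
      ({R : ClosedSets G | ∃ t ∈ V, (t • R.1) ∩ K = Q0 ∩ K} ∈ 𝒰) ∧
      ∃ τ : G, Q0 ∩ K = (τ • P) ∩ K := by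
    intro K hK V hV
    obtain ⟨N, hNc, hN1⟩ := exists_compact_mem_nhds (1 : G)
    have h1N : (1 : G) ∈ N := mem_of_mem_nhds hN1
    set V0 : Set G := interior N with hV0def
    have hV0 : V0 ∈ 𝓝 1 := isOpen_interior.mem_nhds (mem_interior_iff_mem_nhds.mpr hN1)
    have h1V0 : (1 : G) ∈ V0 := mem_interior_iff_mem_nhds.mpr hN1
    set Kp : Set G := N⁻¹ * K with hKpdef
    have hKpc : IsCompact Kp := hNc.inv.mul hK
    have hVK : V0⁻¹ * K ⊆ Kp := Set.mul_subset_mul_right (Set.inv_subset_inv.mpr interior_subset)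
    obtain ⟨K', hK'c, hK'⟩ := h3 Kp hKpc
    set φ : ClosedSets G → G := fun R =>
      if h : ∃ t' ∈ K', R.1 ∩ Kp = (t' • P) ∩ Kp then h.choose else 1 with hφdef
    have hφ : ∀ R ∈ Cset G P, φ R ∈ K' ∧ R.1 ∩ Kp = ((φ R) • P) ∩ Kp := by
      intro R hR
      obtain ⟨s, hs⟩ := hR Kp hKpc
      have hex : ∃ t' ∈ K', R.1 ∩ Kp = (t' • P) ∩ Kp := by
        obtain ⟨t', ht', hp⟩ := hK' s
        exact ⟨t', ht', by rw [hs, hp]⟩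
      simp only [hφdef, dif_pos hex]
      exact ⟨hex.choose_spec.1, hex.choose_spec.2⟩
    have hle : ↑(Ultrafilter.map φ 𝒰) ≤ 𝓟 K' := by
      rw [Filter.le_principal_iff]
      exact Filter.mem_map.mpr (Filter.mem_of_superset hC𝒰 fun R hR => (hφ R hR).1)
    obtain ⟨τ, hτK', hτ⟩ := hK'c.ultrafilter_le_nhds (Ultrafilter.map φ 𝒰) hle
    have htend : Filter.Tendsto φ 𝒰 (𝓝 τ) := hτ
    have hevL : ∀ W ∈ 𝓝 (1 : G), {R : ClosedSets G | τ * (φ R)⁻¹ ∈ W} ∈ 𝒰 := by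
      intro W hW
      have h1 : Filter.Tendsto (fun g : G => τ * g⁻¹) (𝓝 τ) (𝓝 1) := by
        have h2 := Filter.Tendsto.mul
          (tendsto_const_nhds : Filter.Tendsto (fun _ : G => τ) (𝓝 τ) (𝓝 τ))
          (continuous_inv.tendsto τ)
        simpa using h2
      exact (h1.comp htend) hW
    have hevR : ∀ W ∈ 𝓝 (1 : G), {R : ClosedSets G | (φ R) * τ⁻¹ ∈ W} ∈ 𝒰 := by
      intro W hW
      have h1 : Filter.Tendsto (fun g : G => g * τ⁻¹) (𝓝 τ) (𝓝 1) := by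
        have h2 := Filter.Tendsto.mul (continuous_id.tendsto τ)
          (tendsto_const_nhds : Filter.Tendsto (fun _ : G => τ⁻¹) (𝓝 τ) (𝓝 τ⁻¹))
        simpa using h2
      exact (h1.comp htend) hW
    have hQK : Q0 ∩ K = (τ • P) ∩ K := by
      apply Set.Subset.antisymm
      · rintro x ⟨hxQ, hxK⟩
        refine ⟨?_, hxK⟩
        by_contra hxP
        set K3 : Set G := N * Kp with hK3def
        have hK3c : IsCompact K3 := hNc.mul hKpc
        set D : Set G := (τ • P) ∩ K3 with hDdef
        have hD : D.Finite := by
          have h1 : (P ∩ τ⁻¹ • K3).Finite := locFin hPc hPd (hK3c.smul τ⁻¹)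
          have h2 : D = τ • (P ∩ τ⁻¹ • K3) := by
            rw [hDdef, Set.smul_set_inter, smul_inv_smul]
          rw [h2]
          exact h1.smul_set
        have hsep : Disjoint (𝓝ˢ (τ • P)) (𝓝 x) := by
          rw [disjoint_nhdsSet_nhds, (hPc.smul τ).closure_eq]
          exact hxP
        obtain ⟨B, hB, A, hA, hBA⟩ := Filter.disjoint_iff.mp hsep
        have hWd : ∀ d ∈ D, {w : G | w * d ∈ B} ∈ 𝓝 (1 : G) := by
          intro d hd
          have hBd : B ∈ 𝓝 d := (mem_nhdsSet_iff_forall.mp hB) d hd.1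
          have hc : Filter.Tendsto (fun w : G => w * d) (𝓝 1) (𝓝 d) := by
            have h2 := Filter.Tendsto.mul (continuous_id.tendsto (1 : G))
              (tendsto_const_nhds : Filter.Tendsto (fun _ : G => d) (𝓝 (1 : G)) (𝓝 d))
            simpa using h2
          exact hc hBd
        set W : Set G := V0 ∩ ⋂ d ∈ D, {w : G | w * d ∈ B} with hWdef
        have hW : W ∈ 𝓝 (1 : G) := inter_mem hV0 ((Filter.biInter_mem hD).mpr hWd)
        set A' : Set G := A ∩ (V0⁻¹ * K) with hA'def
        have hA' : A' ∈ 𝓝 x := by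
          refine inter_mem hA ((isOpen_interior.inv.mul_right).mem_nhds ?_)
          have h5 := Set.mul_mem_mul (Set.inv_mem_inv.mpr h1V0) hxK
          simpa using h5
        have hEv : (Cset G P ∩ ({R : ClosedSets G | (φ R) * τ⁻¹ ∈ W} ∩
            {R : ClosedSets G | τ * (φ R)⁻¹ ∈ V0})) ∈ 𝒰 :=
          inter_mem hC𝒰 (inter_mem (hevR W hW) (hevL V0 hV0))
        obtain ⟨R, ⟨hRC, hRW, hRV0⟩, z, hzR, hzA'⟩ :=
          Filter.nonempty_of_mem (inter_mem hEv (hxQ A' hA'))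
        have hzKp : z ∈ Kp := hVK hzA'.2
        have hzP : z ∈ (φ R) • P := by
          have h5 : z ∈ R.1 ∩ Kp := ⟨hzR, hzKp⟩
          rw [(hφ R hRC).2] at h5
          exact h5.1
        obtain ⟨pz, hpz, hpzz⟩ := hzP
        set d : G := τ * pz with hddef
        have hdD : d ∈ D := by
          refine ⟨⟨pz, hpz, rfl⟩, ?_⟩
          have h6 : d = (τ * (φ R)⁻¹) * z := by
            rw [← hpzz, hddef]
            simp [smul_eq_mul, mul_assoc]
          rw [h6]
          exact Set.mul_mem_mul (interior_subset hRV0) hzKp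
        have hzB : z ∈ B := by
          have h7 : z = ((φ R) * τ⁻¹) * d := by
            rw [← hpzz, hddef]
            simp [smul_eq_mul, mul_assoc]
          have h8 := Set.mem_iInter₂.mp hRW.2 d hdD
          rw [h7]
          exact h8
        exact Set.disjoint_left.mp hBA hzB hzA'.1
      · rintro x ⟨hxP, hxK⟩
        refine ⟨?_, hxK⟩
        intro U hU
        obtain ⟨p, hpP, hpx⟩ := hxP
        have hU' : U ∩ (V0⁻¹ * K) ∈ 𝓝 x := by
          refine inter_mem hU ((isOpen_interior.inv.mul_right).mem_nhds ?_)
          have h5 := Set.mul_mem_mul (Set.inv_mem_inv.mpr h1V0) hxK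
          simpa using h5
        have hc : Filter.Tendsto (fun g : G => g * p) (𝓝 τ) (𝓝 x) := by
          have h2 := Filter.Tendsto.mul (continuous_id.tendsto τ)
            (tendsto_const_nhds : Filter.Tendsto (fun _ : G => p) (𝓝 τ) (𝓝 p))
          have hx' : τ * p = x := by rw [← hpx]; simp [smul_eq_mul]
          simpa [hx'] using h2
        have hEv2 : (Cset G P ∩ {R : ClosedSets G | (φ R) * p ∈ U ∩ (V0⁻¹ * K)}) ∈ 𝒰 :=
          inter_mem hC𝒰 ((hc.comp htend) hU')
        refine Filter.mem_of_superset hEv2 ?_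
        rintro R ⟨hRC, hRU⟩
        have hzKp : φ R * p ∈ Kp := hVK hRU.2
        have h5 : φ R * p ∈ ((φ R) • P) ∩ Kp := ⟨⟨p, hpP, by simp [smul_eq_mul]⟩, hzKp⟩
        rw [← (hφ R hRC).2] at h5
        exact ⟨φ R * p, h5.1, hRU.1⟩
    refine ⟨?_, τ, hQK⟩
    have hEv3 : (Cset G P ∩ {R : ClosedSets G | τ * (φ R)⁻¹ ∈ V ∩ V0}) ∈ 𝒰 :=
      inter_mem hC𝒰 (hevL _ (inter_mem hV hV0))
    refine Filter.mem_of_superset hEv3 ?_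
    rintro R ⟨hRC, hRV⟩
    refine ⟨τ * (φ R)⁻¹, hRV.1, ?_⟩
    set t : G := τ * (φ R)⁻¹ with htdef
    have htN : t ∈ N := interior_subset hRV.2
    have h1 : R.1 ∩ (t⁻¹ • K) = ((φ R) • P) ∩ (t⁻¹ • K) :=
      inter_mono (hφ R hRC).2 (inv_smul_subset htN)
    have h2 := patch_shift t h1
    rw [← mul_smul] at h2
    have h3 : t * φ R = τ := by
      rw [htdef]
      simp [mul_assoc]
    rw [h3] at h2
    rw [h2, hQK]
  have hQ0C : (⟨Q0, hQ0closed⟩ : ClosedSets G) ∈ Cset G P := by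
    intro K hK
    exact (key K hK Set.univ Filter.univ_mem).2
  refine ⟨⟨Q0, hQ0closed⟩, hQ0C, Filter.le_def.mpr ?_⟩
  intro S hS
  obtain ⟨S', hS'sub, hS'open, hQS'⟩ := mem_nhds_iff.mp hS
  obtain ⟨K, V, hKc, hV, hsub⟩ := hS'open ⟨Q0, hQ0closed⟩ hQS'
  exact Filter.mem_of_superset (Filter.mem_of_superset (key K hKc V hV).1 hsub) hS'sub

/-- (ii) implies (iii) -/
lemma lemD [LocallyCompactSpace G] {P : Set G} (hPc : IsClosed P)
    (hcomp : @IsCompact _ (locTop G)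
      (@closure _ (locTop G) {Q : ClosedSets G | ∃ g : G, Q.1 = g • P})) :
    FLC3 G P := by
  classical
  letI lt : TopologicalSpace (ClosedSets G) := locTop G
  intro K hK
  obtain ⟨N, hNc, hN1⟩ := exists_compact_mem_nhds (1 : G)
  have h1N : (1 : G) ∈ N := mem_of_mem_nhds hN1
  have h1V0 : (1 : G) ∈ interior N := mem_interior_iff_mem_nhds.mpr hN1
  set Kp : Set G := N * K with hKpdef
  have hKpc : IsCompact Kp := hNc.mul hK
  set Ω : Set (ClosedSets G) := closure {Q : ClosedSets G | ∃ g : G, Q.1 = g • P} with hΩdef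
  have hΩC : Ω ⊆ Cset G P := closure_minimal (orbit_sub_C P) (Cclosed P)
  set SQ : Ω → Set (ClosedSets G) := fun Q =>
    {R : ClosedSets G | ∃ t ∈ interior N, (t • R.1) ∩ Kp = Q.1.1 ∩ Kp} with hSQdef
  have hcover : Ω ⊆ ⋃ Q : Ω, SQ Q := by
    intro Q hQ
    refine Set.mem_iUnion.mpr ⟨⟨Q, hQ⟩, 1, h1V0, ?_⟩
    rw [one_smul]
  obtain ⟨F, hF⟩ := hcomp.elim_finite_subcover SQ (fun Q => SQopen hNc hKpc Q.1.1) hcover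
  set σ : Ω → G := fun Q => (hΩC Q.2 Kp hKpc).choose with hσdef
  have hσspec : ∀ Q : Ω, Q.1.1 ∩ Kp = ((σ Q) • P) ∩ Kp := fun Q => (hΩC Q.2 Kp hKpc).choose_spec
  refine ⟨N⁻¹ * (σ '' (F : Set Ω)), hNc.inv.mul ((F.finite_toSet.image σ).isCompact), ?_⟩
  intro t
  have horb : {Q : ClosedSets G | ∃ g : G, Q.1 = g • P} ⊆ Ω := by
    rw [hΩdef]; exact subset_closure
  have hmem : (⟨t • P, hPc.smul t⟩ : ClosedSets G) ∈ Ω := horb ⟨t, rfl⟩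
  obtain ⟨Q, hQF, v, hv, hpatch⟩ := Set.mem_iUnion₂.mp (hF hmem)
  refine ⟨v⁻¹ * σ Q, Set.mul_mem_mul (Set.inv_mem_inv.mpr (interior_subset hv))
    ⟨Q, hQF, rfl⟩, ?_⟩
  rw [hσspec Q] at hpatch
  have h1 : (v • (t • P)) ∩ (v • K) = ((σ Q) • P) ∩ (v • K) := by
    refine inter_mono hpatch ?_
    rintro x ⟨k, hk, rfl⟩
    exact Set.mul_mem_mul (interior_subset hv) hk
  have h2 := congrArg (fun X => v⁻¹ • X) h1
  simp only [Set.smul_set_inter, inv_smul_smul, ← mul_smul] at h2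
  simpa using h2

end FLCaux

open FLCaux in
/-- For a locally finite subset `P` of `G`, the following are
equivalent: (i) `P` has finite local complexity (`P⁻¹P` closed and discrete);
(ii) the orbit `G·P` is pre-compact in the local topology (its closure is compact);
(iii) for every compact `K` there is a compact `K'` such that every translate `tP`
agrees on `K` with some translate `t'P` with `t' ∈ K'`. -/
theorem flc_tfae
    [LocallyCompactSpace G] [SecondCountableTopology G]
    (P : Set G) (hPc : IsClosed P) (hPd : DiscreteTopology ↥P) :
    ((IsClosed (P⁻¹ * P) ∧ DiscreteTopology ↥(P⁻¹ * P)) ↔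
      @IsCompact (ClosedSets G) (locTop G)
        (@closure _ (locTop G) {Q : ClosedSets G | ∃ g : G, Q.1 = g • P})) ∧
    ((IsClosed (P⁻¹ * P) ∧ DiscreteTopology ↥(P⁻¹ * P)) ↔
      ∀ K : Set G, IsCompact K → ∃ K' : Set G, IsCompact K' ∧
        ∀ t : G, ∃ t' ∈ K', (t • P) ∩ K = (t' • P) ∩ K) := by
  classical
  letI lt : TopologicalSpace (ClosedSets G) := locTop G
  rcases P.eq_empty_or_nonempty with rfl | hPne
  · -- degenerate case P = ∅
    have he : ((∅ : Set G)⁻¹ * ∅) = (∅ : Set G) := Set.mul_empty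
    have hi : IsClosed ((∅ : Set G)⁻¹ * ∅) ∧ DiscreteTopology ↥((∅ : Set G)⁻¹ * ∅) := by
      rw [he]
      refine ⟨isClosed_empty, discreteTopology_iff_isOpen_singleton.mpr ?_⟩
      rintro ⟨a, ha⟩
      exact absurd ha (Set.notMem_empty _)
    have horb : {Q : ClosedSets G | ∃ g : G, Q.1 = g • (∅ : Set G)} =
        {(⟨∅, isClosed_empty⟩ : ClosedSets G)} := by
      ext Q
      simp only [Set.mem_setOf_eq, Set.smul_set_empty, Set.mem_singleton_iff]
      constructor
      · rintro ⟨g, hg⟩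
        exact Subtype.ext hg
      · intro h
        exact ⟨1, by rw [h]⟩
    have hCe : Cset G (∅ : Set G) ⊆ {(⟨∅, isClosed_empty⟩ : ClosedSets G)} := by
      intro Q hQ
      have hQ1 : Q.1 = ∅ := by
        rw [Set.eq_empty_iff_forall_notMem]
        intro x hx
        obtain ⟨s, hs⟩ := hQ {x} isCompact_singleton
        have hmem : x ∈ Q.1 ∩ {x} := ⟨hx, rfl⟩
        rw [hs] at hmem
        simp [Set.smul_set_empty] at hmem
      exact Subtype.ext hQ1
    have hii : @IsCompact (ClosedSets G) lt
        (@closure _ lt {Q : ClosedSets G | ∃ g : G, Q.1 = g • (∅ : Set G)}) := by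
      have h2 : @closure _ lt {Q : ClosedSets G | ∃ g : G, Q.1 = g • (∅ : Set G)} =
          {(⟨∅, isClosed_empty⟩ : ClosedSets G)} := by
        apply subset_antisymm
        · exact (closure_minimal (orbit_sub_C _) (Cclosed _)).trans hCe
        · rw [← horb]
          exact subset_closure
      rw [h2]
      exact isCompact_singleton
    have hiii : ∀ K : Set G, IsCompact K → ∃ K' : Set G, IsCompact K' ∧
        ∀ t : G, ∃ t' ∈ K', (t • (∅ : Set G)) ∩ K = (t' • (∅ : Set G)) ∩ K :=
      fun K _ => ⟨{1}, isCompact_singleton, fun t =>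
        ⟨1, rfl, by simp [Set.smul_set_empty]⟩⟩
    exact ⟨⟨fun _ => hii, fun _ => hi⟩, ⟨fun _ => hiii, fun _ => hi⟩⟩
  · -- main case : P nonempty, hence G is T1, T3, T2
    haveI : T1Space G := t1_of_nonempty_locfin hPc hPd hPne
    constructor
    · constructor
      · intro hi
        exact IsCompact.of_isClosed_subset (Ccompact hPc hPd (lemA hi))
          isClosed_closure (closure_minimal (orbit_sub_C P) (Cclosed P))
      · intro hii
        exact lemB hPc hPd (lemD hPc hii)
    · exact ⟨fun hi => lemA hi, fun h3 => lemB hPc hPd h3⟩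
end

section
/- Let G be a locally compact second countable group and P₀ ⊆ G a set of finite local complexity. Then for every P in the Chabauty–Fell orbit closure X of P₀ under left translations, one has P⁻¹P ⊆ P₀⁻¹P₀. In particular every element of X has finite local complexity, and if Γ_G is the subgroup of G generated by P₀, then for every P ∈ X and every p ∈ P one has p⁻¹P ⊆ Γ_G. -/
open Pointwise Topology Filter

variable (G : Type*) [Group G] [TopologicalSpace G] [IsTopologicalGroup G]

/-- If `P₀` has finite local complexity, then every `P` in the
Chabauty–Fell orbit closure of `P₀` satisfies `P⁻¹P ⊆ P₀⁻¹P₀`; in particular `P` has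
finite local complexity, and if `Γ_G` is the subgroup generated by `P₀`, then
`p⁻¹P ⊆ Γ_G` for every `p ∈ P`. -/
theorem orbit_closure_flc
    [LocallyCompactSpace G] [SecondCountableTopology G]
    (P₀ : Set G) (h₀c : IsClosed (P₀⁻¹ * P₀)) (h₀d : DiscreteTopology ↥(P₀⁻¹ * P₀))
    (P : ClosedSets G)
    (hP : P ∈ @closure _ (chabautyFell G) {Q : ClosedSets G | ∃ g : G, Q.1 = g • P₀}) :
    ((P.1)⁻¹ * P.1 ⊆ P₀⁻¹ * P₀) ∧
    (IsClosed ((P.1)⁻¹ * P.1) ∧ DiscreteTopology ↥((P.1)⁻¹ * P.1)) ∧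
    (∀ p ∈ P.1, p⁻¹ • P.1 ⊆ (Subgroup.closure P₀ : Set G)) := by
  have key : (P.1)⁻¹ * P.1 ⊆ P₀⁻¹ * P₀ := by
    rintro x hx
    rw [Set.mem_mul] at hx
    obtain ⟨a, ha, b, hb, rfl⟩ := hx
    rw [Set.mem_inv] at ha
    by_contra hcon
    have hcont : Continuous fun z : G × G => z.1⁻¹ * z.2 :=
      (continuous_fst.inv).mul continuous_snd
    have hpre : IsOpen ((fun z : G × G => z.1⁻¹ * z.2) ⁻¹' (P₀⁻¹ * P₀)ᶜ) :=
      h₀c.isOpen_compl.preimage hcont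
    have hmem : (a⁻¹, b) ∈ (fun z : G × G => z.1⁻¹ * z.2) ⁻¹' (P₀⁻¹ * P₀)ᶜ := by
      simpa using hcon
    obtain ⟨V₁, V₂, hV₁, hV₂, ha1, hb2, hsub⟩ := isOpen_prod_iff.mp hpre _ _ hmem
    have hopen1 : @IsOpen _ (chabautyFell G) {C : ClosedSets G | (C.1 ∩ V₁).Nonempty} :=
      TopologicalSpace.GenerateOpen.basic _ (Or.inl ⟨V₁, hV₁, rfl⟩)
    have hopen2 : @IsOpen _ (chabautyFell G) {C : ClosedSets G | (C.1 ∩ V₂).Nonempty} :=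
      TopologicalSpace.GenerateOpen.basic _ (Or.inl ⟨V₂, hV₂, rfl⟩)
    have hUopen : @IsOpen _ (chabautyFell G)
        ({C : ClosedSets G | (C.1 ∩ V₁).Nonempty} ∩ {C : ClosedSets G | (C.1 ∩ V₂).Nonempty}) :=
      @IsOpen.inter _ (chabautyFell G) _ _ hopen1 hopen2
    have hPU : P ∈ {C : ClosedSets G | (C.1 ∩ V₁).Nonempty} ∩
        {C : ClosedSets G | (C.1 ∩ V₂).Nonempty} :=
      ⟨⟨a⁻¹, ha, ha1⟩, ⟨b, hb, hb2⟩⟩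
    obtain ⟨Q, ⟨hQ1, hQ2⟩, g, hQ⟩ :=
      (@mem_closure_iff _ (chabautyFell G) (x := P) (s := _)).mp hP _ hUopen hPU
    obtain ⟨c, hcQ, hcV⟩ := hQ1
    obtain ⟨d, hdQ, hdV⟩ := hQ2
    rw [hQ] at hcQ hdQ
    obtain ⟨a', ha', rfl⟩ := hcQ
    obtain ⟨b', hb', rfl⟩ := hdQ
    have hbad := hsub (Set.mk_mem_prod hcV hdV)
    simp only [Set.mem_preimage, smul_eq_mul, mul_inv_rev, Set.mem_compl_iff] at hbad
    exact hbad (by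
      have : a'⁻¹ * b' ∈ P₀⁻¹ * P₀ :=
        Set.mul_mem_mul (Set.inv_mem_inv.mpr ha') hb'
      simpa [mul_assoc] using this)
  have hclosed : IsClosed ((P.1)⁻¹ * P.1) := by
    rw [← closure_subset_iff_isClosed]
    intro x hx
    have hxD : x ∈ P₀⁻¹ * P₀ := h₀c.closure_subset ((closure_mono key) hx)
    have hsing : IsOpen ({(⟨x, hxD⟩ : ↥(P₀⁻¹ * P₀))} : Set ↥(P₀⁻¹ * P₀)) :=
      isOpen_discrete _
    obtain ⟨U, hU, hUeq⟩ := isOpen_induced_iff.mp hsing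
    have hxU : x ∈ U := by
      have h1 : (⟨x, hxD⟩ : ↥(P₀⁻¹ * P₀)) ∈ Subtype.val ⁻¹' U := by
        rw [hUeq]; rfl
      exact h1
    obtain ⟨y, hyU, hyS⟩ := mem_closure_iff.mp hx U hU hxU
    have hyx : y = x := by
      have h2 : (⟨y, key hyS⟩ : ↥(P₀⁻¹ * P₀)) ∈ Subtype.val ⁻¹' U := hyU
      rw [hUeq] at h2
      exact congrArg Subtype.val h2
    rwa [hyx] at hyS
  refine ⟨key, ⟨hclosed, DiscreteTopology.of_subset h₀d key⟩, ?_⟩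
  rintro p hp q hq
  obtain ⟨r, hr, rfl⟩ := hq
  have hmem : p⁻¹ * r ∈ P₀⁻¹ * P₀ :=
    key (Set.mul_mem_mul (Set.inv_mem_inv.mpr hp) hr)
  obtain ⟨a, ha, b, hb, hab⟩ := hmem
  rw [Set.mem_inv] at ha
  have : a * b ∈ (Subgroup.closure P₀ : Set G) := by
    have haΓ : a ∈ Subgroup.closure P₀ := by
      have := Subgroup.subset_closure (G := G) (k := P₀) ha
      simpa using (Subgroup.closure P₀).inv_mem this
    exact (Subgroup.closure P₀).mul_mem haΓ (Subgroup.subset_closure hb)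
  rw [show a * b = p⁻¹ * r from hab] at this
  simpa using this
end

section
/- Let G, H be locally compact second countable groups, Γ ⊆ G × H a discrete subgroup, K ⊆ G compact, and W₀ ⊆ H compact. Let h ∈ H and (h_n) a sequence in H with h_n → h. Assume each translated window h_n W₀ and hW₀ is Γ-regular, i.e. (G × h_n ∂W₀) ∩ Γ = ∅ and (G × h ∂W₀) ∩ Γ = ∅. Then there exists n₀ such that for all n ≥ n₀: (K × h_n W₀) ∩ Γ = (K × h W₀) ∩ Γ. -/
open Pointwise Topology Filter

/-- A discrete subgroup meets every compact set in a finite set (no Hausdorff needed). -/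
lemma aux_discrete_inter_compact_finite {X : Type*} [Group X] [TopologicalSpace X]
    [IsTopologicalGroup X] (Γ : Subgroup X) (hΓ : DiscreteTopology ↥Γ)
    {C : Set X} (hC : IsCompact C) : (C ∩ (Γ : Set X)).Finite := by
  -- an open set meeting Γ only in 1
  obtain ⟨U, hUo, hU1, hUi⟩ : ∃ U : Set X, IsOpen U ∧ (1 : X) ∈ U ∧
      ∀ x ∈ U, x ∈ (Γ : Set X) → x = 1 := by
    have h1 : IsOpen ({(1 : ↥Γ)} : Set ↥Γ) := isOpen_discrete _
    rw [isOpen_induced_iff] at h1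
    obtain ⟨U, hUo, hUeq⟩ := h1
    refine ⟨U, hUo, ?_, ?_⟩
    · have : (1 : ↥Γ) ∈ (Subtype.val ⁻¹' U : Set ↥Γ) := by rw [hUeq]; rfl
      exact this
    · intro x hxU hxΓ
      have : (⟨x, hxΓ⟩ : ↥Γ) ∈ (Subtype.val ⁻¹' U : Set ↥Γ) := hxU
      rw [hUeq] at this
      exact congrArg Subtype.val this
  obtain ⟨V, hVo, hV1, hVmul⟩ := exists_open_nhds_one_mul_subset (hUo.mem_nhds hU1)
  set W : Set X := V ∩ V⁻¹ with hWdef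
  have hWo : IsOpen W := hVo.inter hVo.inv
  have hW1 : (1 : X) ∈ W := ⟨hV1, by simpa using hV1⟩
  have hWsub : ∀ x : X, ∀ a ∈ (x • W) ∩ (Γ : Set X), ∀ b ∈ (x • W) ∩ (Γ : Set X), a = b := by
    rintro x a ⟨⟨wa, hwa, rfl⟩, haΓ⟩ b ⟨⟨wb, hwb, rfl⟩, hbΓ⟩
    have hmem : wa⁻¹ * wb ∈ U := by
      apply hVmul
      exact Set.mul_mem_mul (by simpa using hwa.2) hwb.1
    have hΓm : wa⁻¹ * wb ∈ (Γ : Set X) := by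
      have : (x • wa)⁻¹ * (x • wb) ∈ Γ := mul_mem (inv_mem haΓ) hbΓ
      simpa [smul_eq_mul, mul_assoc] using this
    have := hUi _ hmem hΓm
    have hw : wa = wb := by
      have := congrArg (fun z => wa * z) this
      simpa [mul_assoc] using this.symm
    rw [hw]
  obtain ⟨t, _, hcov⟩ := hC.elim_nhds_subcover (fun x => x • W)
    (fun x _ => hWo.smul x |>.mem_nhds (by
      refine ⟨1, hW1, ?_⟩; simp))
  have hsub : C ∩ (Γ : Set X) ⊆ ⋃ x ∈ t, ((x • W) ∩ (Γ : Set X)) := by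
    rintro y ⟨hyC, hyΓ⟩
    obtain ⟨x, hxt, hyx⟩ := Set.mem_iUnion₂.1 (hcov hyC)
    exact Set.mem_iUnion₂.2 ⟨x, hxt, hyx, hyΓ⟩
  refine Set.Finite.subset (Set.Finite.biUnion t.finite_toSet ?_) hsub
  intro x _
  exact Set.Subsingleton.finite (fun a ha b hb => hWsub x a ha b hb)

/-- Let `Γ ≤ G × H` be a discrete subgroup, `K ⊆ G` compact,
`W₀ ⊆ H` compact, and `h_n → h` in `H`. If all translated windows `h_n W₀` and `hW₀`
are `Γ`-regular (their boundaries meet no point of `Γ`), then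
`(K × h_n W₀) ∩ Γ = (K × hW₀) ∩ Γ` for all sufficiently large `n`. -/
theorem window_intersection_stabilizes
    {G H : Type*} [Group G] [TopologicalSpace G] [IsTopologicalGroup G]
    [LocallyCompactSpace G] [SecondCountableTopology G]
    [Group H] [TopologicalSpace H] [IsTopologicalGroup H]
    [LocallyCompactSpace H] [SecondCountableTopology H]
    (Γ : Subgroup (G × H)) (hΓ : DiscreteTopology ↥Γ)
    (K : Set G) (hK : IsCompact K)
    (W₀ : Set H) (hW : IsCompact W₀)
    (h : H) (hn : ℕ → H) (hconv : Filter.Tendsto hn Filter.atTop (𝓝 h))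
    (hreg : ∀ n : ℕ,
      ((Set.univ : Set G) ×ˢ (hn n • frontier W₀)) ∩ (Γ : Set (G × H)) = ∅)
    (hreg' : ((Set.univ : Set G) ×ˢ (h • frontier W₀)) ∩ (Γ : Set (G × H)) = ∅) :
    ∃ n₀ : ℕ, ∀ n ≥ n₀,
      (K ×ˢ (hn n • W₀)) ∩ (Γ : Set (G × H))
        = (K ×ˢ (h • W₀)) ∩ (Γ : Set (G × H)) := by
  classical
  set T : Set H := insert h (Set.range hn) with hTdef
  have hT : IsCompact T := hconv.isCompact_insert_range
  set L : Set H := T * W₀ with hLdef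
  have hL : IsCompact L := hT.mul hW
  have hhsub : h • W₀ ⊆ L := by
    rintro y ⟨w, hw, rfl⟩
    exact Set.mul_mem_mul (Set.mem_insert _ _) hw
  have hnsub : ∀ n, hn n • W₀ ⊆ L := by
    rintro n y ⟨w, hw, rfl⟩
    exact Set.mul_mem_mul (Set.mem_insert_of_mem _ ⟨n, rfl⟩) hw
  set F : Set (G × H) := (K ×ˢ L) ∩ (Γ : Set (G × H)) with hFdef
  have hF : F.Finite := aux_discrete_inter_compact_finite Γ hΓ (hK.prod hL)
  -- for each point of F, membership in `hn n • W₀` stabilizes to membership in `h • W₀`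
  have key : ∀ γ ∈ F, ∀ᶠ n in atTop, (γ.2 ∈ hn n • W₀ ↔ γ.2 ∈ h • W₀) := by
    rintro ⟨g, y⟩ ⟨-, hγΓ⟩
    have hfr : h⁻¹ * y ∉ frontier W₀ := by
      intro hf
      have : (g, y) ∈ ((Set.univ : Set G) ×ˢ (h • frontier W₀)) ∩ (Γ : Set (G × H)) :=
        ⟨⟨trivial, ⟨h⁻¹ * y, hf, by simp [smul_eq_mul, mul_inv_cancel_left]⟩⟩, hγΓ⟩
      rw [hreg'] at this
      exact this
    have htend : Tendsto (fun n => (hn n)⁻¹ * y) atTop (𝓝 (h⁻¹ * y)) :=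
      (hconv.inv).mul tendsto_const_nhds
    by_cases hy : y ∈ h • W₀
    · -- then h⁻¹ y is in the interior
      have hyW : h⁻¹ * y ∈ W₀ := by
        obtain ⟨w, hw, rfl⟩ := hy
        simpa [smul_eq_mul, inv_mul_cancel_left] using hw
      have hint : h⁻¹ * y ∈ interior W₀ := by
        by_contra hni
        exact hfr ⟨subset_closure hyW, hni⟩
      have : ∀ᶠ n in atTop, (hn n)⁻¹ * y ∈ interior W₀ :=
        htend (isOpen_interior.mem_nhds hint)
      filter_upwards [this] with n hnmem
      refine ⟨fun _ => hy, fun _ => ?_⟩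
      exact ⟨(hn n)⁻¹ * y, interior_subset hnmem, by simp [smul_eq_mul, mul_inv_cancel_left]⟩
    · -- then h⁻¹ y is outside the closure
      have hyW : h⁻¹ * y ∉ W₀ := by
        intro hc
        exact hy ⟨h⁻¹ * y, hc, by simp [smul_eq_mul, mul_inv_cancel_left]⟩
      have hncl : h⁻¹ * y ∉ closure W₀ := by
        intro hc
        exact hfr ⟨hc, fun hi => hyW (interior_subset hi)⟩
      have : ∀ᶠ n in atTop, (hn n)⁻¹ * y ∈ (closure W₀)ᶜ :=
        htend (isOpen_compl_iff.2 isClosed_closure |>.mem_nhds hncl)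
      filter_upwards [this] with n hnmem
      constructor
      · rintro ⟨w, hw, rfl⟩
        exact absurd (subset_closure (by simpa [smul_eq_mul, inv_mul_cancel_left] using hw))
          hnmem
      · intro hc; exact absurd hc hy
  have hall : ∀ᶠ n in atTop, ∀ γ ∈ F, (γ.2 ∈ hn n • W₀ ↔ γ.2 ∈ h • W₀) :=
    (hF.eventually_all).2 key
  obtain ⟨n₀, hn₀⟩ := eventually_atTop.1 hall
  refine ⟨n₀, fun n hnn => ?_⟩
  ext ⟨g, y⟩
  constructor
  · rintro ⟨⟨hgK, hyW⟩, hγΓ⟩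
    have hγF : (g, y) ∈ F := ⟨⟨hgK, hnsub n hyW⟩, hγΓ⟩
    exact ⟨⟨hgK, (hn₀ n hnn _ hγF).1 hyW⟩, hγΓ⟩
  · rintro ⟨⟨hgK, hyW⟩, hγΓ⟩
    have hγF : (g, y) ∈ F := ⟨⟨hgK, hhsub hyW⟩, hγΓ⟩
    exact ⟨⟨hgK, (hn₀ n hnn _ hγF).2 hyW⟩, hγΓ⟩
end

section
/- Let G be a locally compact second countable group with left Haar measure m_G, fix a proper left-invariant compatible metric on G with open balls B_δ around the identity, and let P₀ ⊆ G be a set of finite local complexity. Suppose the periodization map 𝒫 satisfies M_δ := sup over locally finite Q in the hull of P₀ of Σ_{x∈Q} ρ(x) < ∞ for some nonnegative continuous ρ supported in B_δ with ∫ ρ dm_G = 1. Then for every compact L ⊆ G one has |P₀ ∩ L_{-δ}| ≤ M_δ · m_G(L), where L_{-δ} = ∩_{t ∈ B_δ} Lt. -/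
open Pointwise Topology Filter MeasureTheory

variable (G : Type*) [Group G] [TopologicalSpace G] [IsTopologicalGroup G]

/-- Let `P₀` be an FLC subset of `G`, `B = B_δ` an identity
neighbourhood, and `ρ ≥ 0` continuous with support in `B` and `∫ ρ = 1`. If the
periodizations `𝒫ρ(Q) = Σ_{x ∈ Q} ρ(x)` are bounded by `M = M_δ` over the hull of
`P₀`, then for every compact `L`, `|P₀ ∩ L_{-δ}| ≤ M · m_G(L)`, where
`L_{-δ} = ⋂_{t ∈ B} Lt`. -/
theorem card_bound_in_shrunken_set
    [LocallyCompactSpace G] [SecondCountableTopology G]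
    [MeasurableSpace G] [BorelSpace G]
    (mG : Measure G) [mG.IsHaarMeasure] [mG.IsInvInvariant] [mG.IsMulRightInvariant]
    (P₀ : Set G) (hP₀c : IsClosed P₀) (hP₀d : DiscreteTopology ↥P₀)
    (hFLC : IsClosed (P₀⁻¹ * P₀) ∧ DiscreteTopology ↥(P₀⁻¹ * P₀))
    (B : Set G) (hB : B ∈ 𝓝 (1 : G))
    (ρ : G → ℝ) (hρc : Continuous ρ) (hρ0 : ∀ x, 0 ≤ ρ x)
    (hρsupp : tsupport ρ ⊆ B) (hρint : ∫ x, ρ x ∂mG = 1)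
    (M : ℝ)
    (hM : ∀ Q ∈ @closure _ (chabautyFell G) {Q : ClosedSets G | ∃ g : G, Q.1 = g • P₀},
      (Q.1 ∩ tsupport ρ).Finite ∧ ∑ᶠ x ∈ Q.1, ρ x ≤ M) :
    ∀ L : Set G, IsCompact L →
      (P₀ ∩ ⋂ t ∈ B, (fun x => x * t) '' L).Finite ∧
      ((P₀ ∩ ⋂ t ∈ B, (fun x => x * t) '' L).ncard : ℝ) ≤ M * (mG L).toReal := by
  classical
  intro L hL
  have h1B : (1 : G) ∈ B := mem_of_mem_nhds hB
  set F := P₀ ∩ ⋂ t ∈ B, (fun x => x * t) '' L with hFdef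
  have hmemF : ∀ x ∈ F, ∀ t ∈ B, x * t⁻¹ ∈ L := by
    intro x hx t ht
    obtain ⟨l, hl, hlx⟩ := Set.mem_iInter₂.1 hx.2 t ht
    have : x * t⁻¹ = l := by rw [← hlx]; group
    rwa [this]
  have hFsubL : F ⊆ L := fun x hx => by simpa using hmemF x hx 1 h1B
  have hFfin : F.Finite := by
    have hcomp : IsCompact (L ∩ P₀) := hL.inter_right hP₀c
    have hdisc : DiscreteTopology ↥(L ∩ P₀) :=
      DiscreteTopology.of_subset hP₀d Set.inter_subset_right
    exact (hcomp.finite ⟨hdisc⟩).subset fun x hx => ⟨hFsubL hx, hx.1⟩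
  refine ⟨hFfin, ?_⟩
  set Lc := closure L with hLcdef
  have hLcComp : IsCompact Lc := hL.closure
  have hLcMeas : MeasurableSet Lc := isClosed_closure.measurableSet
  -- support of shifted ρ
  have hsupp : ∀ x ∈ F, Function.support (fun s => ρ (s⁻¹ * x)) ⊆ L := by
    intro x hx s hs
    have hmem : s⁻¹ * x ∈ B := hρsupp (subset_tsupport ρ hs)
    have h2 := hmemF x hx _ hmem
    have : x * (s⁻¹ * x)⁻¹ = s := by group
    rwa [this] at h2
  -- integrability of shifted ρ on Lc
  have hI : ∀ x ∈ F, IntegrableOn (fun s => ρ (s⁻¹ * x)) Lc mG := by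
    intro x hx
    have hc : Continuous fun s : G => ρ (s⁻¹ * x) :=
      hρc.comp ((continuous_inv).mul continuous_const)
    have hcs : HasCompactSupport fun s : G => ρ (s⁻¹ * x) := by
      rw [HasCompactSupport]
      exact hLcComp.of_isClosed_subset isClosed_closure (closure_mono (hsupp x hx))
    exact (hc.integrable_of_hasCompactSupport hcs).integrableOn
  -- each shifted integral equals 1
  have hint1 : ∀ x ∈ F, ∫ s in Lc, ρ (s⁻¹ * x) ∂mG = 1 := by
    intro x hx
    have hz : ∀ s, s ∉ Lc → ρ (s⁻¹ * x) = 0 := by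
      intro s hs
      by_contra h
      exact hs (subset_closure (hsupp x hx h))
    rw [setIntegral_eq_integral_of_forall_compl_eq_zero hz]
    have h1 : ∫ s, ρ (s⁻¹ * x) ∂mG = ∫ s, ρ (s * x) ∂mG :=
      integral_inv_eq_self (fun s => ρ (s * x)) mG
    rw [h1, integral_mul_right_eq_self ρ x, hρint]
  -- uniform bound on translated periodizations
  have hbound : ∀ s : G, ∑ x ∈ hFfin.toFinset, ρ (s⁻¹ * x) ≤ M := by
    intro s
    have hQc : IsClosed (s⁻¹ • P₀) := hP₀c.smul s⁻¹
    have horb : (⟨s⁻¹ • P₀, hQc⟩ : ClosedSets G) ∈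
        {Q : ClosedSets G | ∃ g : G, Q.1 = g • P₀} := ⟨s⁻¹, rfl⟩
    have hQmem := @subset_closure _ (chabautyFell G) _ _ horb
    obtain ⟨hQfin, hQsum⟩ := hM ⟨s⁻¹ • P₀, hQc⟩ hQmem
    have hsupfin : ((s⁻¹ • P₀) ∩ Function.support ρ).Finite :=
      hQfin.subset (Set.inter_subset_inter_right _ (subset_tsupport ρ))
    rw [finsum_mem_eq_sum ρ hsupfin] at hQsum
    refine le_trans ?_ hQsum
    have hinj : ∀ a ∈ hFfin.toFinset, ∀ b ∈ hFfin.toFinset,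
        s⁻¹ * a = s⁻¹ * b → a = b := fun a _ b _ h => mul_left_cancel h
    rw [← Finset.sum_image (g := fun x => s⁻¹ * x) (f := ρ) hinj]
    rw [← Finset.sum_filter_ne_zero (f := ρ)]
    refine Finset.sum_le_sum_of_subset_of_nonneg ?_ (fun y _ _ => hρ0 y)
    intro y hy
    simp only [Finset.mem_filter, Finset.mem_image, Set.Finite.mem_toFinset] at hy ⊢
    obtain ⟨⟨x, hxF, hxy⟩, hyne⟩ := hy
    refine ⟨⟨x, hxF.1, hxy⟩, hyne⟩
  -- put everything together
  haveI : IsFiniteMeasure (mG.restrict Lc) :=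
    ⟨by rw [Measure.restrict_apply_univ]; exact hLcComp.measure_lt_top⟩
  have hsum : IntegrableOn (fun s => ∑ x ∈ hFfin.toFinset, ρ (s⁻¹ * x)) Lc mG := by
    apply integrable_finset_sum
    intro x hx
    exact hI x (hFfin.mem_toFinset.1 hx)
  have key : (F.ncard : ℝ) ≤ M * (mG Lc).toReal := by
    calc (F.ncard : ℝ) = ∑ x ∈ hFfin.toFinset, (1 : ℝ) := by
          rw [Finset.sum_const, nsmul_eq_mul, mul_one,
            Set.ncard_eq_toFinset_card F hFfin]
      _ = ∑ x ∈ hFfin.toFinset, ∫ s in Lc, ρ (s⁻¹ * x) ∂mG :=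
          Finset.sum_congr rfl fun x hx => (hint1 x (hFfin.mem_toFinset.1 hx)).symm
      _ = ∫ s in Lc, ∑ x ∈ hFfin.toFinset, ρ (s⁻¹ * x) ∂mG :=
          (integral_finset_sum _ fun x hx => hI x (hFfin.mem_toFinset.1 hx)).symm
      _ ≤ ∫ s in Lc, M ∂mG :=
          setIntegral_mono_on hsum (integrableOn_const hLcComp.measure_lt_top.ne)
            hLcMeas fun s _ => hbound s
      _ = M * (mG Lc).toReal := by
          rw [setIntegral_const, smul_eq_mul, mul_comm, measureReal_def]
  rwa [hL.measure_closure mG] at key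
end

section
/- Let G be a locally compact second countable group and (F_t) a weakly admissible sequence of compact subsets of G: each F_t has positive Haar measure and there exist continuous α, β : [0,1) → ℝ₊ with α(0) = β(0) = 0 such that (F_t)_δ ⊆ F_{t+α(δ)} and sup_s m_G(F_{s+δ})/m_G(F_s) = 1 + β(δ) for all t, δ > 0. Let P₀ ⊆ G be locally finite and suppose there exists δ > 0 and M_δ with |P₀ ∩ L_{-δ}| ≤ M_δ · m_G(L) for every compact L. Then sup_t |P₀ ∩ F_t| / m_G(F_t) < ∞. -/
open Pointwise Topology Filter MeasureTheory

/-- Let `(F_t)` be a weakly admissible family of compact subsets of a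
lcsc group `G` (with respect to balls `B_δ = {x | d(1,x) < δ}` of an admissible metric
`d`), i.e. each `F_t` has positive Haar measure and there are continuous
`α, β : [0,1) → ℝ₊` vanishing at `0` with `(F_t)_δ ⊆ F_{t+α(δ)}` and
`m_G(F_{s+δ}) ≤ (1+β(δ)) m_G(F_s)`. If `P₀` is locally finite and
`|P₀ ∩ L_{-δ}| ≤ M · m_G(L)` for some `δ ∈ (0,1)`, `M` and all compact `L`, then
`sup_t |P₀ ∩ F_t| / m_G(F_t) < ∞`. -/
theorem sup_density_finite
    {G : Type*} [Group G] [TopologicalSpace G] [IsTopologicalGroup G]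
    [LocallyCompactSpace G] [SecondCountableTopology G]
    [MeasurableSpace G] [BorelSpace G]
    (mG : Measure G) [mG.IsHaarMeasure]
    (d : G → G → ℝ)
    (hsymm : ∀ x y : G, d x y = d y x)
    (hzero : ∀ x y : G, d x y = 0 ↔ x = y)
    (htri : ∀ x y z : G, d x z ≤ d x y + d y z)
    (hleftinv : ∀ g x y : G, d (g * x) (g * y) = d x y)
    (hproper : ∀ (x : G) (R : ℝ), IsCompact {y : G | d x y ≤ R})
    (hcompat : ∀ x : G, (nhds x).HasBasis (fun r : ℝ => 0 < r)
      (fun r => {y : G | d x y < r}))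
    (F : ℝ → Set G) (hFc : ∀ t : ℝ, IsCompact (F t)) (hFpos : ∀ t : ℝ, 0 < mG (F t))
    (α β : ℝ → ℝ)
    (hαc : ContinuousOn α (Set.Ico 0 1)) (hβc : ContinuousOn β (Set.Ico 0 1))
    (hα0 : α 0 = 0) (hβ0 : β 0 = 0)
    (hαnn : ∀ δ : ℝ, 0 ≤ α δ) (hβnn : ∀ δ : ℝ, 0 ≤ β δ)
    (hadm1 : ∀ t δ : ℝ, 0 < δ → δ < 1 →
      F t * {x : G | d 1 x < δ} ⊆ F (t + α δ))
    (hadm2 : ∀ s δ : ℝ, 0 < δ → δ < 1 →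
      mG (F (s + δ)) ≤ ENNReal.ofReal (1 + β δ) * mG (F s))
    (P₀ : Set G) (hP₀c : IsClosed P₀) (hP₀d : DiscreteTopology ↥P₀)
    (δ : ℝ) (hδ : 0 < δ) (hδ1 : δ < 1) (M : ℝ)
    (hM : ∀ L : Set G, IsCompact L →
      ((P₀ ∩ ⋂ t ∈ {x : G | d 1 x < δ}, (fun y => y * t) '' L).ncard : ℝ)
        ≤ M * (mG L).toReal) :
    ∃ C : ℝ, ∀ t : ℝ, 0 < t → ((P₀ ∩ F t).ncard : ℝ) ≤ C * (mG (F t)).toReal := by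
    -- setup step size
  set a := α δ with ha
  set n := Nat.floor a + 1 with hn
  set h := a / n with hh
  have hnpos : (0:ℝ) < n := by positivity
  have han : a < (n:ℝ) := by
    have := Nat.lt_floor_add_one a
    push_cast [hn]
    linarith
  have hh1 : h < 1 := by rw [hh, div_lt_one hnpos]; exact han
  have hnh : (n:ℝ) * h = a := by rw [hh]; field_simp
  have hβhnn : 0 ≤ β h := hβnn h
  -- key measure bound
  have key : ∀ t : ℝ, mG (F (t + a)) ≤ ENNReal.ofReal ((1 + β h) ^ n) * mG (F t) := by
    intro t
    rcases eq_or_lt_of_le (hαnn δ) with h0 | hapos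
    · have ha0 : a = 0 := by rw [ha, ← h0]
      have hh0 : h = 0 := by rw [hh, ha0]; simp
      rw [ha0, hh0, hβ0, add_zero]
      simp
    · rw [← ha] at hapos
      have hhpos : 0 < h := by positivity
      have iter : ∀ k : ℕ, mG (F (t + k * h)) ≤ ENNReal.ofReal ((1 + β h) ^ k) * mG (F t) := by
        intro k
        induction k with
        | zero => simp
        | succ k ih =>
          have : t + (k + 1 : ℕ) * h = (t + k * h) + h := by push_cast; ring
          rw [this]
          calc mG (F ((t + k * h) + h)) ≤ ENNReal.ofReal (1 + β h) * mG (F (t + k * h)) :=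
                hadm2 _ h hhpos hh1
            _ ≤ ENNReal.ofReal (1 + β h) * (ENNReal.ofReal ((1 + β h) ^ k) * mG (F t)) := by
                gcongr
            _ = ENNReal.ofReal ((1 + β h) ^ (k + 1)) * mG (F t) := by
                rw [← mul_assoc, ← ENNReal.ofReal_mul (by linarith), pow_succ]
                ring_nf
      have := iter n
      rwa [hnh] at this
  -- M is nonnegative
  have hM0 : 0 ≤ M := by
    have h1 := hM (F 0) (hFc 0)
    have h2 : 0 < (mG (F 0)).toReal :=
      ENNReal.toReal_pos (hFpos 0).ne' (hFc 0).measure_lt_top.ne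
    have h3 : (0:ℝ) ≤ ((P₀ ∩ ⋂ t ∈ {x : G | d 1 x < δ}, (fun y => y * t) '' (F 0)).ncard : ℝ) :=
      Nat.cast_nonneg _
    nlinarith
  refine ⟨M * (1 + β h) ^ n, fun t ht => ?_⟩
  set L := F (t + a) with hL
  -- the intersection set
  set S := P₀ ∩ ⋂ x ∈ {x : G | d 1 x < δ}, (fun y => y * x) '' L with hS
  have hsub : P₀ ∩ F t ⊆ S := by
    rintro p ⟨hp, hpF⟩
    refine ⟨hp, Set.mem_iInter₂.2 fun x hx => ?_⟩
    have hxinv : d 1 x⁻¹ < δ := by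
      have e : d 1 x⁻¹ = d 1 x := by
        have e2 := hleftinv x 1 x⁻¹
        simp only [mul_one, mul_inv_cancel] at e2
        rw [← e2, hsymm]
      rw [e]; exact hx
    have hmem : p * x⁻¹ ∈ F (t + a) :=
      hadm1 t δ hδ hδ1 (Set.mul_mem_mul hpF hxinv)
    exact ⟨p * x⁻¹, hmem, by simp⟩
  have hSsub : S ⊆ P₀ ∩ L := by
    rintro p ⟨hp, hpI⟩
    have h1 : d (1:G) 1 < δ := by rw [(hzero 1 1).2 rfl]; exact hδ
    have := Set.mem_iInter₂.1 hpI 1 h1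
    obtain ⟨q, hq, hq1⟩ := this
    simp only [mul_one] at hq1
    exact ⟨hp, hq1 ▸ hq⟩
  have hPLfin : (P₀ ∩ L).Finite := by
    have hc : IsCompact (P₀ ∩ L) := (hFc (t + a)).inter_left hP₀c
    have : DiscreteTopology ↥(P₀ ∩ L) :=
      DiscreteTopology.of_subset hP₀d Set.inter_subset_left
    exact hc.finite (isDiscrete_iff_discreteTopology.mpr this)
  have hSfin : S.Finite := hPLfin.subset hSsub
  have hcard : ((P₀ ∩ F t).ncard : ℝ) ≤ (S.ncard : ℝ) := by
    exact_mod_cast Set.ncard_le_ncard hsub hSfin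
  have hMbound := hM L (hFc (t + a))
  have hmeas : (mG L).toReal ≤ (1 + β h) ^ n * (mG (F t)).toReal := by
    have hfin : mG (F t) ≠ ⊤ := (hFc t).measure_lt_top.ne
    have := key t
    have h2 : (mG L).toReal ≤ (ENNReal.ofReal ((1 + β h) ^ n) * mG (F t)).toReal :=
      ENNReal.toReal_mono (by finiteness) this
    rwa [ENNReal.toReal_mul, ENNReal.toReal_ofReal (by positivity)] at h2
  calc ((P₀ ∩ F t).ncard : ℝ) ≤ (S.ncard : ℝ) := hcard
    _ ≤ M * (mG L).toReal := hMbound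
    _ ≤ M * ((1 + β h) ^ n * (mG (F t)).toReal) := by nlinarith
    _ = M * (1 + β h) ^ n * (mG (F t)).toReal := by ring
end
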